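/- arXiv:1208.0346 — 2 statements merged into one kernel-verified Lean document; each statement's English description precedes it below -/
import Mathlib

section
/- If φ and ψ are commuting derivations of an associative algebra A over a field of characteristic zero, then the formula a * b = m(exp(ℏ φ⊗ψ)(a⊗b)) = Σ_{n≥0} (ℏⁿ/n!) φⁿ(a)·ψⁿ(b) defines an associative multiplication on A[[ℏ]]. -/
open PowerSeries in
/-- The Groenewold–Moyal star product on `A[[ℏ]]` determined by commuting derivations
`φ, ψ`: the coefficient of `ℏ^n` in `f * g` is
`Σ_{m+i+j=n} (1/m!) φ^m(f_i) · ψ^m(g_j)`. -/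
noncomputable def moyalStar {k A : Type*} [Field k] [CharZero k] [Ring A] [Algebra k A]
    (φ ψ : A →ₗ[k] A) (f g : PowerSeries A) : PowerSeries A :=
  PowerSeries.mk fun n =>
    ∑ p ∈ Finset.HasAntidiagonal.antidiagonal n, ∑ q ∈ Finset.HasAntidiagonal.antidiagonal p.2,
      (p.1.factorial : k)⁻¹ •
        ((φ ^ p.1) (PowerSeries.coeff q.1 f) * (ψ ^ p.1) (PowerSeries.coeff q.2 g))


section aux
set_option linter.unusedSectionVars false
variable {k A : Type*} [Field k] [CharZero k] [Ring A] [Algebra k A]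

open PowerSeries

lemma pow_apply_succ (φ : A →ₗ[k] A) (m : ℕ) (x : A) :
    (φ ^ (m + 1)) x = φ ((φ ^ m) x) := by
  rw [pow_succ', Module.End.mul_apply]

lemma pow_leibniz (φ : A →ₗ[k] A) (hφ : ∀ a b : A, φ (a * b) = φ a * b + a * φ b)
    (r : ℕ) (a b : A) :
    (φ ^ r) (a * b) =
      ∑ p ∈ Finset.HasAntidiagonal.antidiagonal r, r.choose p.1 • ((φ ^ p.1) a * (φ ^ p.2) b) := by
  induction r with
  | zero => simp
  | succ r ih =>
      rw [pow_apply_succ, ih, map_sum]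
      have h1 : ∀ p ∈ Finset.HasAntidiagonal.antidiagonal r,
          φ (r.choose p.1 • ((φ ^ p.1) a * (φ ^ p.2) b)) =
            r.choose p.1 • ((φ ^ (p.1 + 1)) a * (φ ^ p.2) b)
              + r.choose p.1 • ((φ ^ p.1) a * (φ ^ (p.2 + 1)) b) := by
        intro p _
        rw [map_nsmul, hφ, smul_add, pow_apply_succ, pow_apply_succ]
      rw [Finset.sum_congr rfl h1, Finset.sum_add_distrib]
      have hS1 : ∑ p ∈ Finset.HasAntidiagonal.antidiagonal (r + 1),
            r.choose p.1 • ((φ ^ p.1) a * (φ ^ p.2) b)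
          = 1 • ((φ ^ 0) a * (φ ^ (r + 1)) b)
            + ∑ p ∈ Finset.HasAntidiagonal.antidiagonal r,
                r.choose (p.1 + 1) • ((φ ^ (p.1 + 1)) a * (φ ^ p.2) b) := by
        rw [Finset.Nat.sum_antidiagonal_succ
          (f := fun p => r.choose p.1 • ((φ ^ p.1) a * (φ ^ p.2) b))]
        simp
      have hS2 : ∑ p ∈ Finset.HasAntidiagonal.antidiagonal (r + 1),
            r.choose p.1 • ((φ ^ p.1) a * (φ ^ p.2) b)
          = ∑ p ∈ Finset.HasAntidiagonal.antidiagonal r,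
              r.choose p.1 • ((φ ^ p.1) a * (φ ^ (p.2 + 1)) b) := by
        rw [Finset.Nat.sum_antidiagonal_succ'
          (f := fun p => r.choose p.1 • ((φ ^ p.1) a * (φ ^ p.2) b))]
        simp [Nat.choose_succ_self]
      have hR : ∑ p ∈ Finset.HasAntidiagonal.antidiagonal (r + 1),
            (r + 1).choose p.1 • ((φ ^ p.1) a * (φ ^ p.2) b)
          = 1 • ((φ ^ 0) a * (φ ^ (r + 1)) b)
            + (∑ p ∈ Finset.HasAntidiagonal.antidiagonal r,
                r.choose p.1 • ((φ ^ (p.1 + 1)) a * (φ ^ p.2) b)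
              + ∑ p ∈ Finset.HasAntidiagonal.antidiagonal r,
                r.choose (p.1 + 1) • ((φ ^ (p.1 + 1)) a * (φ ^ p.2) b)) := by
        rw [Finset.Nat.sum_antidiagonal_succ
          (f := fun p => (r + 1).choose p.1 • ((φ ^ p.1) a * (φ ^ p.2) b))]
        simp only [Nat.choose_zero_right]
        congr 1
        rw [← Finset.sum_add_distrib]
        refine Finset.sum_congr rfl fun p _ => ?_
        rw [Nat.choose_succ_succ, add_nsmul]
      rw [hR]
      have h2 := hS1.symm.trans hS2
      rw [← h2]
      abel

lemma pow_leibniz_div (φ : A →ₗ[k] A) (hφ : ∀ a b : A, φ (a * b) = φ a * b + a * φ b)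
    (r : ℕ) (a b : A) :
    (r.factorial : k)⁻¹ • (φ ^ r) (a * b) =
      ∑ p ∈ Finset.HasAntidiagonal.antidiagonal r,
        ((p.1.factorial : k)⁻¹ * (p.2.factorial : k)⁻¹) • ((φ ^ p.1) a * (φ ^ p.2) b) := by
  rw [pow_leibniz φ hφ, Finset.smul_sum]
  refine Finset.sum_congr rfl fun p hp => ?_
  have hpr : p.1 + p.2 = r := Finset.HasAntidiagonal.mem_antidiagonal.1 hp
  rw [← Nat.cast_smul_eq_nsmul k, smul_smul]
  congr 1
  have hfactN : r.choose p.1 * p.1.factorial * p.2.factorial = r.factorial := by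
    have := Nat.choose_mul_factorial_mul_factorial (show p.1 ≤ r by omega)
    rwa [show r - p.1 = p.2 by omega] at this
  have hfact : (r.factorial : k) = (r.choose p.1 : k) * (p.1.factorial : k) * (p.2.factorial : k) := by
    exact_mod_cast hfactN.symm
  have h1 : (p.1.factorial : k) ≠ 0 := Nat.cast_ne_zero.2 (Nat.factorial_ne_zero _)
  have h2 : (p.2.factorial : k) ≠ 0 := Nat.cast_ne_zero.2 (Nat.factorial_ne_zero _)
  have h3 : (r.choose p.1 : k) ≠ 0 :=
    Nat.cast_ne_zero.2 (Nat.choose_pos (show p.1 ≤ r by omega)).ne'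
  rw [hfact]
  field_simp

abbrev MIdx : Type := (_ : ℕ × ℕ) × (_ : ℕ × ℕ) × (_ : ℕ × ℕ) × (_ : ℕ × ℕ) × (ℕ × ℕ)

noncomputable def TermL (φ ψ : A →ₗ[k] A) (f g h : PowerSeries A) (x : MIdx) : A :=
  (x.2.2.1.1.factorial : k)⁻¹ •
    ((((x.2.2.2.2.1.factorial : k)⁻¹ * (x.2.2.2.2.2.factorial : k)⁻¹) •
        ((φ ^ x.2.2.2.2.1) ((φ ^ x.2.2.1.1) (coeff x.2.2.2.1.1 f)) *
         (φ ^ x.2.2.2.2.2) ((ψ ^ x.2.2.1.1) (coeff x.2.2.2.1.2 g)))) *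
      (ψ ^ x.1.1) (coeff x.2.1.2 h))

noncomputable def TermR (φ ψ : A →ₗ[k] A) (f g h : PowerSeries A) (y : MIdx) : A :=
  (y.2.2.1.1.factorial : k)⁻¹ •
    ((φ ^ y.1.1) (coeff y.2.1.1 f) *
      (((y.2.2.2.2.1.factorial : k)⁻¹ * (y.2.2.2.2.2.factorial : k)⁻¹) •
        ((ψ ^ y.2.2.2.2.1) ((φ ^ y.2.2.1.1) (coeff y.2.2.2.1.1 g)) *
         (ψ ^ y.2.2.2.2.2) ((ψ ^ y.2.2.1.1) (coeff y.2.2.2.1.2 h)))))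

lemma lhs_eq (φ ψ : A →ₗ[k] A) (hφ : ∀ a b : A, φ (a * b) = φ a * b + a * φ b)
    (f g h : PowerSeries A) (n : ℕ) :
    coeff n (moyalStar φ ψ (moyalStar φ ψ f g) h) =
      ∑ x ∈ (Finset.HasAntidiagonal.antidiagonal n).sigma (fun p =>
          (Finset.HasAntidiagonal.antidiagonal p.2).sigma (fun q =>
            (Finset.HasAntidiagonal.antidiagonal q.1).sigma (fun p' =>
              (Finset.HasAntidiagonal.antidiagonal p'.2).sigma (fun _q' =>
                Finset.HasAntidiagonal.antidiagonal p.1)))), TermL φ ψ f g h x := by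
  simp only [Finset.sum_sigma]
  simp only [moyalStar, coeff_mk]
  refine Finset.sum_congr rfl fun p hp => Finset.sum_congr rfl fun q hq => ?_
  rw [map_sum, Finset.sum_mul, Finset.smul_sum]
  refine Finset.sum_congr rfl fun p' hp' => ?_
  rw [map_sum, Finset.sum_mul, Finset.smul_sum]
  refine Finset.sum_congr rfl fun q' hq' => ?_
  rw [map_smul, smul_mul_assoc, smul_comm ((p.1.factorial : k)⁻¹) ((p'.1.factorial : k)⁻¹),
    ← smul_mul_assoc, pow_leibniz_div φ hφ, Finset.sum_mul, Finset.smul_sum]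
  rfl

lemma rhs_eq (φ ψ : A →ₗ[k] A) (hψ : ∀ a b : A, ψ (a * b) = ψ a * b + a * ψ b)
    (f g h : PowerSeries A) (n : ℕ) :
    coeff n (moyalStar φ ψ f (moyalStar φ ψ g h)) =
      ∑ y ∈ (Finset.HasAntidiagonal.antidiagonal n).sigma (fun p =>
          (Finset.HasAntidiagonal.antidiagonal p.2).sigma (fun q =>
            (Finset.HasAntidiagonal.antidiagonal q.2).sigma (fun p' =>
              (Finset.HasAntidiagonal.antidiagonal p'.2).sigma (fun _q' =>
                Finset.HasAntidiagonal.antidiagonal p.1)))), TermR φ ψ f g h y := by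
  simp only [Finset.sum_sigma]
  simp only [moyalStar, coeff_mk]
  refine Finset.sum_congr rfl fun p hp => Finset.sum_congr rfl fun q hq => ?_
  rw [map_sum, Finset.mul_sum, Finset.smul_sum]
  refine Finset.sum_congr rfl fun p' hp' => ?_
  rw [map_sum, Finset.mul_sum, Finset.smul_sum]
  refine Finset.sum_congr rfl fun q' hq' => ?_
  rw [map_smul, mul_smul_comm, smul_comm ((p.1.factorial : k)⁻¹) ((p'.1.factorial : k)⁻¹),
    ← mul_smul_comm, pow_leibniz_div ψ hψ, Finset.mul_sum, Finset.smul_sum]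
  rfl

theorem moyalStar_assoc' (φ ψ : A →ₗ[k] A)
    (hφ : ∀ a b : A, φ (a * b) = φ a * b + a * φ b)
    (hψ : ∀ a b : A, ψ (a * b) = ψ a * b + a * ψ b)
    (hcomm : φ.comp ψ = ψ.comp φ) :
    ∀ f g h : PowerSeries A,
      moyalStar φ ψ (moyalStar φ ψ f g) h = moyalStar φ ψ f (moyalStar φ ψ g h) := by
  have hc : Commute φ ψ := by
    show φ * ψ = ψ * φ
    rw [Module.End.mul_eq_comp, Module.End.mul_eq_comp]
    exact hcomm
  have comm : ∀ (a b : ℕ) (u : A), (φ ^ a) ((ψ ^ b) u) = (ψ ^ b) ((φ ^ a) u) := by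
    intro a b u
    rw [← Module.End.mul_apply, hc.pow_pow a b, Module.End.mul_apply]
  have compφ : ∀ (a b : ℕ) (u : A), (φ ^ a) ((φ ^ b) u) = (φ ^ (a + b)) u := by
    intro a b u; rw [← Module.End.mul_apply, ← pow_add]
  have compψ : ∀ (a b : ℕ) (u : A), (ψ ^ a) ((ψ ^ b) u) = (ψ ^ (a + b)) u := by
    intro a b u; rw [← Module.End.mul_apply, ← pow_add]
  intro f g h
  apply PowerSeries.ext; intro n
  rw [lhs_eq φ ψ hφ f g h n, rhs_eq φ ψ hψ f g h n]
  refine Finset.sum_nbij'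
    (fun x => ⟨(x.2.2.1.1 + x.2.2.2.2.1, x.2.2.2.1.1 + (x.2.2.2.2.2 + (x.2.2.2.1.2 + x.2.1.2))),
      (x.2.2.2.1.1, x.2.2.2.2.2 + (x.2.2.2.1.2 + x.2.1.2)),
      (x.2.2.2.2.2, x.2.2.2.1.2 + x.2.1.2),
      (x.2.2.2.1.2, x.2.1.2),
      (x.2.2.1.1, x.2.2.2.2.1)⟩)
    (fun y => ⟨(y.2.2.2.2.2 + y.2.2.1.1, (y.2.2.2.2.1 + (y.2.1.1 + y.2.2.2.1.1)) + y.2.2.2.1.2),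
      (y.2.2.2.2.1 + (y.2.1.1 + y.2.2.2.1.1), y.2.2.2.1.2),
      (y.2.2.2.2.1, y.2.1.1 + y.2.2.2.1.1),
      (y.2.1.1, y.2.2.2.1.1),
      (y.2.2.2.2.2, y.2.2.1.1)⟩)
    ?_ ?_ ?_ ?_ ?_
  · rintro ⟨⟨r, p2⟩, ⟨x1, l⟩, ⟨s, p2'⟩, ⟨i, j⟩, t1, t2⟩ hx
    simp only [Finset.mem_sigma, Finset.HasAntidiagonal.mem_antidiagonal, and_true, true_and] at hx ⊢
    omega
  · rintro ⟨⟨r, p2⟩, ⟨x1, l⟩, ⟨s, p2'⟩, ⟨i, j⟩, t1, t2⟩ hy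
    simp only [Finset.mem_sigma, Finset.HasAntidiagonal.mem_antidiagonal, and_true, true_and] at hy ⊢
    omega
  · rintro ⟨⟨r, p2⟩, ⟨x1, l⟩, ⟨s, p2'⟩, ⟨i, j⟩, t1, t2⟩ hx
    simp only [Finset.mem_sigma, Finset.HasAntidiagonal.mem_antidiagonal] at hx
    dsimp only
    rw [show s + (i + j) = x1 by omega, show i + j = p2' by omega,
      show t1 + t2 = r by omega, show x1 + l = p2 by omega]
  · rintro ⟨⟨r, p2⟩, ⟨x1, l⟩, ⟨s, p2'⟩, ⟨i, j⟩, t1, t2⟩ hy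
    simp only [Finset.mem_sigma, Finset.HasAntidiagonal.mem_antidiagonal] at hy
    dsimp only
    rw [show s + (i + j) = l by omega, show i + j = p2' by omega,
      show t1 + t2 = r by omega, show x1 + l = p2 by omega]
  · rintro ⟨⟨r, p2⟩, ⟨x1, l⟩, ⟨s, p2'⟩, ⟨i, j⟩, t1, t2⟩ hx
    simp only [Finset.mem_sigma, Finset.HasAntidiagonal.mem_antidiagonal] at hx
    obtain ⟨h1, h2, h3, h4, h5⟩ := hx
    simp only [TermL, TermR]
    rw [compφ t1 s, comm t2 s, compψ t1 t2, h5, show t1 + s = s + t1 from add_comm t1 s]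
    simp only [smul_mul_assoc, mul_smul_comm, smul_smul, mul_assoc]
    congr 1
    ring

end aux

/-- If `φ` and `ψ` are commuting derivations of an associative algebra `A` over a field
of characteristic zero, then `a * b = m(exp(ℏ φ⊗ψ)(a⊗b))` defines an associative
multiplication on `A[[ℏ]]`. -/
theorem moyalStar_assoc (k A : Type*) [Field k] [CharZero k] [Ring A] [Algebra k A]
    (φ ψ : A →ₗ[k] A)
    (hφ : ∀ a b : A, φ (a * b) = φ a * b + a * φ b)
    (hψ : ∀ a b : A, ψ (a * b) = ψ a * b + a * ψ b)
    (hcomm : φ.comp ψ = ψ.comp φ) :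
    ∀ f g h : PowerSeries A,
      moyalStar φ ψ (moyalStar φ ψ f g) h = moyalStar φ ψ f (moyalStar φ ψ g h) := by
  exact moyalStar_assoc' φ ψ hφ hψ hcomm
end

section
/- In the Weyl algebra W₁ = k⟨x,y⟩/(xy − yx − 1) over a field of characteristic zero, every derivation is inner. -/
/-- The defining relation `x*y = q•(y*x) + ℏ` of the (generalized) q-Weyl algebra,
as a relation on the free algebra `k⟨x,y⟩` (with `x = ι 0`, `y = ι 1`). -/
inductive QWeylRel (k : Type*) [Field k] (q ℏ : k) :
    FreeAlgebra k (Fin 2) → FreeAlgebra k (Fin 2) → Prop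
  | rel : QWeylRel k q ℏ (FreeAlgebra.ι k 0 * FreeAlgebra.ι k 1)
      (q • (FreeAlgebra.ι k 1 * FreeAlgebra.ι k 0) +
        algebraMap k (FreeAlgebra k (Fin 2)) ℏ)

/-- `QWeyl k q ℏ = k⟨x,y⟩/(xy − q·yx − ℏ)`. -/
abbrev QWeyl (k : Type*) [Field k] (q ℏ : k) := RingQuot (QWeylRel k q ℏ)

/-- The generator `x`. -/
noncomputable abbrev QWeyl.x (k : Type*) [Field k] (q ℏ : k) : QWeyl k q ℏ :=
  RingQuot.mkAlgHom k (QWeylRel k q ℏ) (FreeAlgebra.ι k 0)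

/-- The generator `y`. -/
noncomputable abbrev QWeyl.y (k : Type*) [Field k] (q ℏ : k) : QWeyl k q ℏ :=
  RingQuot.mkAlgHom k (QWeylRel k q ℏ) (FreeAlgebra.ι k 1)

namespace WeylInner

noncomputable section

variable (k : Type*) [Field k]

local notation "X" => QWeyl.x k 1 1
local notation "Y" => QWeyl.y k 1 1

theorem comm : X * Y = Y * X + 1 := by
  have h := RingQuot.mkAlgHom_rel k (QWeylRel.rel (k := k) (q := 1) (ℏ := 1))
  simpa using h

/-- normal-ordered monomials -/
def bb (p : ℕ × ℕ) : QWeyl k 1 1 := Y ^ p.1 * X ^ p.2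

theorem xpow_comm (j : ℕ) : X ^ j * Y = Y * X ^ j + (j : k) • X ^ (j - 1) := by
  induction j with
  | zero => simp
  | succ j ih =>
    rcases Nat.eq_zero_or_pos j with hj | hj
    · subst hj; simpa [pow_one] using comm k
    · have hj1 : j - 1 + 1 = j := Nat.succ_pred_eq_of_pos hj
      calc X ^ (j+1) * Y = X ^ j * (X * Y) := by rw [pow_succ, mul_assoc]
        _ = X ^ j * Y * X + X ^ j := by rw [comm, mul_add, mul_one, mul_assoc]
        _ = Y * X ^ (j+1) + (j : k) • X ^ j + X ^ j := by
              rw [ih, add_mul, smul_mul_assoc, mul_assoc, ← pow_succ, ← pow_succ, hj1]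
        _ = Y * X ^ (j+1) + ((j:k) + 1) • X ^ j := by rw [add_smul, one_smul, add_assoc]
        _ = Y * X ^ (j+1) + ((j+1 : ℕ) : k) • X ^ (j + 1 - 1) := by push_cast; simp

theorem ypow_comm (i : ℕ) : X * Y ^ i = Y ^ i * X + (i : k) • Y ^ (i - 1) := by
  induction i with
  | zero => simp
  | succ i ih =>
    rcases Nat.eq_zero_or_pos i with hi | hi
    · subst hi; simpa [pow_one] using comm k
    · have hi1 : i - 1 + 1 = i := Nat.succ_pred_eq_of_pos hi
      calc X * Y ^ (i+1) = (X * Y ^ i) * Y := by rw [pow_succ, mul_assoc]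
        _ = Y ^ i * (X * Y) + (i : k) • Y ^ i := by
              rw [ih, add_mul, smul_mul_assoc, mul_assoc, ← pow_succ, hi1]
        _ = Y ^ (i+1) * X + Y ^ i + (i : k) • Y ^ i := by
              rw [comm, mul_add, mul_one, ← mul_assoc, ← pow_succ]
        _ = Y ^ (i+1) * X + ((i:k) + 1) • Y ^ i := by rw [add_smul, one_smul, add_assoc]; abel
        _ = Y ^ (i+1) * X + ((i+1 : ℕ) : k) • Y ^ (i + 1 - 1) := by push_cast; simp

theorem bb_mul_Y (p : ℕ × ℕ) :
    bb k p * Y = Y * bb k p + (p.2 : k) • bb k (p.1, p.2 - 1) := by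
  obtain ⟨i, j⟩ := p
  calc bb k (i,j) * Y = Y ^ i * (X ^ j * Y) := by rw [bb, mul_assoc]
    _ = Y ^ i * (Y * X ^ j) + (j : k) • (Y ^ i * X ^ (j-1)) := by
          rw [xpow_comm, mul_add, mul_smul_comm]
    _ = Y * bb k (i,j) + (j : k) • bb k (i, j-1) := by
          rw [bb, bb, ← mul_assoc, ← pow_succ, pow_succ', mul_assoc]

theorem X_mul_bb (p : ℕ × ℕ) :
    X * bb k p = bb k p * X + (p.1 : k) • bb k (p.1 - 1, p.2) := by
  obtain ⟨i, j⟩ := p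
  calc X * bb k (i,j) = (X * Y ^ i) * X ^ j := by rw [bb, mul_assoc]
    _ = Y ^ i * X * X ^ j + (i : k) • (Y ^ (i-1) * X ^ j) := by
          rw [ypow_comm, add_mul, smul_mul_assoc]
    _ = bb k (i,j) * X + (i : k) • bb k (i-1, j) := by
          rw [bb, bb, mul_assoc, mul_assoc, ← pow_succ', ← pow_succ]

theorem bb_mul_X (p : ℕ × ℕ) : bb k p * X = bb k (p.1, p.2 + 1) := by
  rw [bb, bb, mul_assoc, ← pow_succ]

theorem Y_mul_bb (p : ℕ × ℕ) : Y * bb k p = bb k (p.1 + 1, p.2) := by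
  rw [bb, bb, ← mul_assoc, ← pow_succ']

/-! ### The polynomial representation -/

open Polynomial

def lX : Module.End k (Polynomial k) := LinearMap.mulLeft k Polynomial.X
def der : Module.End k (Polynomial k) := Polynomial.derivative
def E (p : ℕ × ℕ) : Module.End k (Polynomial k) := lX k ^ p.1 * der k ^ p.2

lemma der_lX : der k * lX k = lX k * der k + 1 := by
  apply LinearMap.ext
  intro p
  simp [der, lX, Module.End.mul_apply, Polynomial.derivative_mul, add_comm]

lemma E_apply (p : ℕ × ℕ) (m : ℕ) :
    E k p (Polynomial.X ^ m) =
      (Nat.descFactorial m p.2 : k) • Polynomial.X ^ (p.1 + (m - p.2)) := by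
  simp only [E, Module.End.mul_apply, lX, der, LinearMap.pow_mulLeft, LinearMap.mulLeft_apply,
    Module.End.pow_apply, Polynomial.iterate_derivative_X_pow_eq_smul, mul_smul_comm, ← pow_add]

lemma E_indep [CharZero k] : LinearIndependent k (E k) := by
  rw [linearIndependent_iff']
  intro s g hsum
  suffices h : ∀ m : ℕ, ∀ p ∈ s, p.2 = m → g p = 0 by
    intro p hp; exact h p.2 p hp rfl
  intro m
  induction m using Nat.strong_induction_on with
  | _ m IH =>
  intro p0 hp0 hp0m
  have happ : (0 : Polynomial k) =
      ∑ p ∈ s, g p • ((Nat.descFactorial m p.2 : k) • Polynomial.X ^ (p.1 + (m - p.2))) := by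
    have := congrArg (fun f : Module.End k (Polynomial k) => f (Polynomial.X ^ m)) hsum
    simp only [LinearMap.zero_apply] at this
    rw [← this]
    rw [LinearMap.sum_apply]
    simp only [LinearMap.smul_apply, E_apply]
  have happ2 : (0 : Polynomial k) =
      ∑ p ∈ s.filter (fun p => p.2 = m), (g p * (Nat.factorial m : k)) • Polynomial.X ^ p.1 := by
    rw [happ, Finset.sum_filter]
    apply Finset.sum_congr rfl
    intro p hp
    by_cases h2 : p.2 = m
    · simp only [h2, if_pos]
      rw [Nat.descFactorial_self, Nat.sub_self, add_zero, smul_smul]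
    · rw [if_neg h2]
      rcases Nat.lt_or_ge m p.2 with hlt | hge
      · rw [Nat.descFactorial_eq_zero_iff_lt.mpr hlt]
        simp
      · have : p.2 < m := lt_of_le_of_ne hge (by omega)
        rw [IH p.2 this p hp rfl]
        simp
  have hcoeff := congrArg (fun q : Polynomial k => q.coeff p0.1) happ2
  simp only [Polynomial.coeff_zero, Polynomial.finset_sum_coeff, Polynomial.coeff_smul,
    Polynomial.coeff_X_pow, smul_eq_mul] at hcoeff
  rw [Finset.sum_eq_single p0] at hcoeff
  · norm_num at hcoeff
    have hf := Nat.factorial_ne_zero m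
    rcases hcoeff with h | h
    · exact h
    · exact absurd h hf
  · intro p hp hne
    rw [if_neg, mul_zero]
    intro h1
    apply hne
    have h2 : p.2 = m := (Finset.mem_filter.mp hp).2
    exact Prod.ext h1.symm (h2.trans hp0m.symm)
  · intro hns
    exact absurd (Finset.mem_filter.mpr ⟨hp0, hp0m⟩) hns

def freeRep : FreeAlgebra k (Fin 2) →ₐ[k] Module.End k (Polynomial k) :=
  FreeAlgebra.lift k (fun i => if i = 0 then der k else lX k)

lemma freeRep_rel : ∀ ⦃x y : FreeAlgebra k (Fin 2)⦄, QWeylRel k 1 1 x y →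
    freeRep k x = freeRep k y := by
  rintro _ _ ⟨⟩
  simp only [freeRep, map_mul, map_add, map_smul, FreeAlgebra.lift_ι_apply, AlgHom.commutes,
    one_smul, if_pos rfl]
  norm_num
  exact der_lX k

def ψ : QWeyl k 1 1 →ₐ[k] Module.End k (Polynomial k) :=
  RingQuot.liftAlgHom k ⟨freeRep k, freeRep_rel k⟩

lemma ψ_X : ψ k X = der k := by
  rw [ψ, RingQuot.liftAlgHom_mkAlgHom_apply]
  simp [freeRep]

lemma ψ_Y : ψ k Y = lX k := by
  rw [ψ, RingQuot.liftAlgHom_mkAlgHom_apply]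
  simp [freeRep]

lemma ψ_bb (p : ℕ × ℕ) : ψ k (bb k p) = E k p := by
  rw [bb, map_mul, map_pow, map_pow, ψ_X, ψ_Y, E]

theorem bb_indep [CharZero k] : LinearIndependent k (bb k) := by
  apply LinearIndependent.of_comp (ψ k).toLinearMap
  have : (ψ k).toLinearMap ∘ bb k = E k := by
    funext p
    exact ψ_bb k p
  rw [this]
  exact E_indep k

theorem bb_span : Submodule.span k (Set.range (bb k)) = ⊤ := by
  set S := Submodule.span k (Set.range (bb k)) with hS
  have hbbS : ∀ p, bb k p ∈ S := fun p => Submodule.subset_span ⟨p, rfl⟩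
  have hone : (1 : QWeyl k 1 1) ∈ S := by
    have : bb k (0,0) = 1 := by simp [bb]
    rw [← this]; exact hbbS _
  have hXc : ∀ w ∈ S, X * w ∈ S := by
    intro w hw
    induction hw using Submodule.span_induction with
    | mem w hw =>
        obtain ⟨p, rfl⟩ := hw
        rw [X_mul_bb, bb_mul_X]
        exact S.add_mem (hbbS _) (S.smul_mem _ (hbbS _))
    | zero => simpa using S.zero_mem
    | add u v hu hv hu' hv' => rw [mul_add]; exact S.add_mem hu' hv'
    | smul t u hu hu' => rw [mul_smul_comm]; exact S.smul_mem _ hu'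
  have hYc : ∀ w ∈ S, Y * w ∈ S := by
    intro w hw
    induction hw using Submodule.span_induction with
    | mem w hw =>
        obtain ⟨p, rfl⟩ := hw
        rw [Y_mul_bb]
        exact hbbS _
    | zero => simpa using S.zero_mem
    | add u v hu hv hu' hv' => rw [mul_add]; exact S.add_mem hu' hv'
    | smul t u hu hu' => rw [mul_smul_comm]; exact S.smul_mem _ hu'
  rw [eq_top_iff]
  intro w _
  obtain ⟨u, rfl⟩ := RingQuot.mkAlgHom_surjective k (QWeylRel k 1 1) w
  have key : ∀ u : FreeAlgebra k (Fin 2), ∀ s ∈ S,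
      RingQuot.mkAlgHom k (QWeylRel k 1 1) u * s ∈ S := by
    intro u
    induction u using FreeAlgebra.induction with
    | grade0 r =>
        intro s hs
        rw [AlgHom.commutes, ← Algebra.smul_def]
        exact S.smul_mem _ hs
    | grade1 i =>
        intro s hs
        fin_cases i
        · exact hXc s hs
        · exact hYc s hs
    | mul u v hu hv =>
        intro s hs
        rw [map_mul, mul_assoc]
        exact hu _ (hv _ hs)
    | add u v hu hv =>
        intro s hs
        rw [map_add, add_mul]
        exact S.add_mem (hu _ hs) (hv _ hs)
  have := key u 1 hone
  simpa using this

def B [CharZero k] : Module.Basis (ℕ × ℕ) k (QWeyl k 1 1) :=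
  Module.Basis.mk (bb_indep k) (by rw [bb_span])


lemma smul_sub' (r : k) (A B : QWeyl k 1 1) : r • (A - B) = r • A - r • B :=
  smul_sub r A B

lemma sum_sub_distrib' {ι : Type*} (s : Finset ι) (f g : ι → QWeyl k 1 1) :
    ∑ i ∈ s, (f i - g i) = ∑ i ∈ s, f i - ∑ i ∈ s, g i :=
  Finset.sum_sub_distrib f g

lemma bb_comm_Y (q : ℕ × ℕ) :
    bb k q * Y - Y * bb k q = (q.2 : k) • bb k (q.1, q.2 - 1) := by
  rw [bb_mul_Y]; abel

lemma bb_comm_X (q : ℕ × ℕ) :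
    bb k q * X - X * bb k q = -((q.1 : k) • bb k (q.1 - 1, q.2)) := by
  rw [X_mul_bb]; abel

lemma repr_sum [CharZero k] (w : QWeyl k 1 1) :
    ∑ p ∈ ((B k).repr w).support, ((B k).repr w) p • bb k p = w := by
  have h := (B k).linearCombination_repr w
  rw [Finsupp.linearCombination_apply, Finsupp.sum] at h
  simpa [B, Module.Basis.mk_apply] using h

theorem main [CharZero k] (D : QWeyl k 1 1 →ₗ[k] QWeyl k 1 1)
    (hD : ∀ u v : QWeyl k 1 1, D (u * v) = D u * v + u * D v) :
    ∃ c : QWeyl k 1 1, ∀ w : QWeyl k 1 1, D w = c * w - w * c := by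
  have hD1 : D 1 = 0 := by
    have h := hD 1 1
    rw [one_mul, mul_one, one_mul] at h
    have h2 : D 1 + D 1 = D 1 + 0 := by rw [add_zero, ← h]
    exact (add_left_cancel h2)
  have hcon : D X * Y + X * D Y = D Y * X + Y * D X := by
    have h1 := hD X Y
    have h2 := hD Y X
    rw [comm, map_add, hD1, add_zero, h2] at h1
    exact h1.symm
  set a := D X with ha
  set b := D Y with hb
  -- first corrector: c₁ with c₁Y - Yc₁ = b
  set rb := (B k).repr b with hrb
  set c₁ : QWeyl k 1 1 :=
    ∑ p ∈ rb.support, (rb p / ((p.2 : k) + 1)) • bb k (p.1, p.2 + 1) with hc₁def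
  have hc₁ : c₁ * Y - Y * c₁ = b := by
    rw [hc₁def, Finset.sum_mul, Finset.mul_sum, ← sum_sub_distrib']
    have : ∀ p ∈ rb.support,
        (rb p / ((p.2:k)+1)) • bb k (p.1, p.2+1) * Y -
          Y * ((rb p / ((p.2:k)+1)) • bb k (p.1, p.2+1)) = rb p • bb k p := by
      intro p _
      rw [smul_mul_assoc, mul_smul_comm, ← smul_sub', bb_comm_Y, smul_smul]
      have h1 : (((p.1, p.2+1) : ℕ × ℕ).2 : k) = (p.2 : k) + 1 := by push_cast; rfl
      rw [h1, div_mul_cancel₀ _ (Nat.cast_add_one_ne_zero p.2)]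
      norm_num
    rw [Finset.sum_congr rfl this, hrb, repr_sum]
  set a' := a - (c₁ * X - X * c₁) with ha'
  have hkey : a' * Y - Y * a' = 0 := by
    have hc₁Y : c₁ * Y = Y * c₁ + b := by rw [← hc₁]; abel
    have h1 : c₁ * X * Y = Y * c₁ * X + b * X + c₁ := by
      rw [mul_assoc, comm, mul_add, mul_one, ← mul_assoc, hc₁Y, add_mul]
    have h2 : X * c₁ * Y = Y * X * c₁ + c₁ + X * b := by
      rw [mul_assoc, hc₁Y, mul_add, ← mul_assoc, comm, add_mul, one_mul]
    have hcon' : a * Y = b * X + Y * a - X * b := by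
      rw [← hcon]; abel
    rw [ha']
    simp only [sub_mul, mul_sub]
    rw [h1, h2, hcon']
    simp only [← mul_assoc]
    abel
  set ra' := (B k).repr a' with hra'
  have hzero : ∑ p ∈ ra'.support, (ra' p * (p.2 : k)) • bb k (p.1, p.2 - 1) = 0 := by
    have h : a' * Y - Y * a' =
        ∑ p ∈ ra'.support, (ra' p * (p.2 : k)) • bb k (p.1, p.2 - 1) := by
      conv_lhs => rw [← repr_sum k a']
      rw [Finset.sum_mul, Finset.mul_sum, ← sum_sub_distrib']
      apply Finset.sum_congr rfl
      intro p _
      rw [smul_mul_assoc, mul_smul_comm, ← smul_sub', bb_comm_Y, smul_smul]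
    rw [← h, hkey]
  have hsupp : ∀ p ∈ ra'.support, p.2 = 0 := by
    intro p hp
    by_contra h2
    set g : ℕ × ℕ → k := fun q => ra' (q.1, q.2 + 1) * ((q.2 : k) + 1) with hg
    set t := (ra'.support.filter (fun q => q.2 ≠ 0)).image
      (fun q => (q.1, q.2 - 1)) with ht
    have hinj : Set.InjOn (fun q : ℕ × ℕ => (q.1, q.2 - 1))
        (ra'.support.filter (fun q => q.2 ≠ 0)) := by
      intro q1 h1 q2 h2' he
      have hq1 : q1.2 ≠ 0 := (Finset.mem_filter.mp h1).2
      have hq2 : q2.2 ≠ 0 := (Finset.mem_filter.mp h2').2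
      simp only [Prod.mk.injEq] at he
      have : q1.2 = q2.2 := by omega
      exact Prod.ext he.1 this
    have hsum0 : ∑ q ∈ t, g q • bb k q = 0 := by
      rw [ht, Finset.sum_image hinj]
      have heq : ∀ q ∈ ra'.support.filter (fun q => q.2 ≠ 0),
          g ((fun q : ℕ × ℕ => (q.1, q.2 - 1)) q) • bb k ((fun q : ℕ × ℕ => (q.1, q.2-1)) q)
            = (ra' q * (q.2 : k)) • bb k (q.1, q.2 - 1) := by
        intro q hq
        have hq2 : q.2 ≠ 0 := (Finset.mem_filter.mp hq).2
        have h3 : q.2 - 1 + 1 = q.2 := Nat.succ_pred_eq_of_pos (Nat.pos_of_ne_zero hq2)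
        simp only [hg]
        congr 2
        · exact congrArg (fun n => ra' (q.1, n)) h3
        · rw [← h3]; push_cast; ring
      rw [Finset.sum_congr rfl heq]
      rw [Finset.sum_filter_of_ne]
      · exact hzero
      · intro q _ hne
        by_contra h0
        apply hne
        rw [h0]
        push_cast
        rw [mul_zero, zero_smul]
    have := linearIndependent_iff'.mp (bb_indep k) t g hsum0 (p.1, p.2 - 1)
      (Finset.mem_image.mpr ⟨p, Finset.mem_filter.mpr ⟨hp, h2⟩, rfl⟩)
    rw [hg] at this
    simp only at this
    have h3 : p.2 - 1 + 1 = p.2 := Nat.succ_pred_eq_of_pos (Nat.pos_of_ne_zero h2)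
    rw [h3] at this
    have hp2 : ((p.2 - 1 : ℕ) : k) + 1 ≠ 0 := Nat.cast_add_one_ne_zero _
    have hra0 : ra' (p.1, p.2) = 0 := by
      rcases mul_eq_zero.mp this with h | h
      · exact h
      · exact absurd h hp2
    have : ra' p ≠ 0 := Finsupp.mem_support_iff.mp hp
    exact this (by rw [show p = (p.1, p.2) from rfl]; exact hra0)
  -- second corrector
  set c₂ : QWeyl k 1 1 :=
    ∑ p ∈ ra'.support, (-(ra' p / ((p.1 : k) + 1))) • bb k (p.1 + 1, p.2) with hc₂def
  have hc₂X : c₂ * X - X * c₂ = a' := by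
    rw [hc₂def, Finset.sum_mul, Finset.mul_sum, ← sum_sub_distrib']
    have : ∀ p ∈ ra'.support,
        (-(ra' p / ((p.1:k)+1))) • bb k (p.1+1, p.2) * X -
          X * ((-(ra' p / ((p.1:k)+1))) • bb k (p.1+1, p.2)) = ra' p • bb k p := by
      intro p _
      rw [smul_mul_assoc, mul_smul_comm, ← smul_sub', bb_comm_X, smul_neg, neg_smul, neg_neg,
        smul_smul]
      have h1 : (((p.1+1, p.2) : ℕ × ℕ).1 : k) = (p.1 : k) + 1 := by push_cast; rfl
      rw [h1, div_mul_cancel₀ _ (Nat.cast_add_one_ne_zero p.1)]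
      rfl
    rw [Finset.sum_congr rfl this, hra', repr_sum]
  have hc₂Y : c₂ * Y - Y * c₂ = 0 := by
    rw [hc₂def, Finset.sum_mul, Finset.mul_sum, ← sum_sub_distrib']
    apply Finset.sum_eq_zero
    intro p hp
    rw [smul_mul_assoc, mul_smul_comm, ← smul_sub', bb_comm_Y]
    have : (((p.1+1, p.2) : ℕ × ℕ).2 : k) = ((0:ℕ) : k) := by rw [hsupp p hp]
    rw [this]
    simp
  refine ⟨c₁ + c₂, ?_⟩
  have hcX : (c₁ + c₂) * X - X * (c₁ + c₂) = a := by
    have : (c₁ + c₂) * X - X * (c₁ + c₂) = (c₁ * X - X * c₁) + (c₂ * X - X * c₂) := by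
      rw [add_mul, mul_add]; abel
    rw [this, hc₂X, ha']
    abel
  have hcY : (c₁ + c₂) * Y - Y * (c₁ + c₂) = b := by
    have : (c₁ + c₂) * Y - Y * (c₁ + c₂) = (c₁ * Y - Y * c₁) + (c₂ * Y - Y * c₂) := by
      rw [add_mul, mul_add]; abel
    rw [this, hc₁, hc₂Y, add_zero]
  set c := c₁ + c₂
  intro w
  obtain ⟨u, rfl⟩ := RingQuot.mkAlgHom_surjective k (QWeylRel k 1 1) w
  induction u using FreeAlgebra.induction with
  | grade0 r =>
      rw [AlgHom.commutes]
      have h1 : D ((algebraMap k (QWeyl k 1 1)) r) = 0 := by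
        rw [Algebra.algebraMap_eq_smul_one, map_smul, hD1, smul_zero]
      rw [h1, Algebra.commutes, sub_self]
  | grade1 i =>
      fin_cases i
      · exact hcX.symm
      · exact hcY.symm
  | mul u v hu hv =>
      rw [map_mul, hD, hu, hv]
      simp only [sub_mul, mul_sub, mul_assoc]
      abel
  | add u v hu hv =>
      rw [map_add, map_add, hu, hv]
      simp only [mul_add, add_mul]
      abel

end
end WeylInner

/-- Every derivation of the first Weyl algebra `W₁ = k⟨x,y⟩/(xy − yx − 1)` over a
field of characteristic zero is inner: `H¹(W₁, W₁) = 0`. -/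
theorem weyl_derivation_inner (k : Type*) [Field k] [CharZero k]
    (D : QWeyl k 1 1 →ₗ[k] QWeyl k 1 1)
    (hD : ∀ u v : QWeyl k 1 1, D (u * v) = D u * v + u * D v) :
    ∃ c : QWeyl k 1 1, ∀ w : QWeyl k 1 1, D w = c * w - w * c :=
  WeylInner.main k D hD
end
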